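/- Let X_1,…,X_n be independent nonnegative random variables, each with support contained in {0} ∪ [L, ∞) for some L > 0, and suppose Σ_{v=1}^n E[X_v] ≥ L. Then for every assignment of the indices to k bins V_1,…,V_k, we have E[max_{1≤i≤k} Σ_{v∈V_i} X_v] ≥ L/4. -/

import Mathlib

open MeasureTheory ProbabilityTheory Finset

theorem stmt_12_meas {Ω : Type*} [MeasureSpace Ω] [IsProbabilityMeasure (ℙ : Measure Ω)]
    (n k : ℕ) (hk : 0 < k) (L : ℝ) (hL : 0 < L)
    (X : Fin n → Ω → ℝ)
    (hmeas : ∀ v, Measurable (X v))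
    (hint : ∀ v, Integrable (X v) ℙ)
    (h0 : ∀ v ω, 0 ≤ X v ω)
    (hindep : iIndepFun X ℙ)
    (hsupp : ∀ v, ∀ᵐ ω ∂ℙ, X v ω = 0 ∨ L ≤ X v ω)
    (hsum : L ≤ ∑ v, ∫ ω, X v ω)
    (assign : Fin n → Fin k) :
    L / 4 ≤ ∫ ω, ⨆ i : Fin k,
      ∑ v ∈ Finset.univ.filter (fun v => assign v = i), X v ω := by
  classical
  haveI : Nonempty (Fin k) := ⟨⟨0, hk⟩⟩
  set S : Fin k → Ω → ℝ := fun i ω => ∑ v ∈ Finset.univ.filter (fun v => assign v = i), X v ω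
    with hS
  set M : Ω → ℝ := fun ω => ⨆ i, S i ω with hM
  have hSnn : ∀ i ω, 0 ≤ S i ω := fun i ω => Finset.sum_nonneg fun v _ => h0 v ω
  have hbdd : ∀ ω, BddAbove (Set.range fun i => S i ω) := fun ω =>
    (Set.finite_range _).bddAbove
  have hMnn : ∀ ω, 0 ≤ M ω := fun ω =>
    le_trans (hSnn (Classical.arbitrary _) ω) (le_ciSup (hbdd ω) _)
  have hSleM : ∀ i ω, S i ω ≤ M ω := fun i ω => le_ciSup (hbdd ω) i
  have hMle : ∀ ω, M ω ≤ ∑ v, X v ω := fun ω =>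
    ciSup_le fun i => Finset.sum_le_sum_of_subset_of_nonneg (Finset.filter_subset _ _)
      (fun v _ _ => h0 v ω)
  have hSmeas : ∀ i, Measurable (S i) := fun i =>
    Finset.measurable_sum _ fun v _ => hmeas v
  have hMmeas : Measurable M := Measurable.iSup hSmeas
  have hsumint : Integrable (fun ω => ∑ v, X v ω) ℙ :=
    integrable_finset_sum _ fun v _ => hint v
  have hMint : Integrable M ℙ := by
    refine hsumint.mono' hMmeas.aestronglyMeasurable (ae_of_all _ fun ω => ?_)
    rw [Real.norm_of_nonneg (hMnn ω)]; exact hMle ω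
  -- the event that all variables vanish
  set A : Set Ω := ⋂ v, X v ⁻¹' {0} with hA
  have hAmeas : MeasurableSet A :=
    MeasurableSet.iInter fun v => hmeas v (measurableSet_singleton 0)
  -- single variable below max
  have hXleM : ∀ v ω, X v ω ≤ M ω := by
    intro v ω
    refine le_trans ?_ (hSleM (assign v) ω)
    exact Finset.single_le_sum (fun w _ => h0 w ω)
      (by simp)
  by_cases hq : (ℙ A).toReal ≤ 3 / 4
  · -- with prob ≥ 1/4 some variable is nonzero, hence max ≥ L
    have hgle : ∀ᵐ ω ∂ℙ, (Aᶜ).indicator (fun _ => L) ω ≤ M ω := by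
      filter_upwards [ae_all_iff.2 hsupp] with ω hω
      by_cases hωA : ω ∈ A
      · rw [Set.indicator_of_notMem (Set.notMem_compl_iff.mpr hωA)]
        exact hMnn ω
      · rw [Set.indicator_of_mem (by simpa using hωA)]
        have : ∃ v, X v ω ≠ 0 := by
          simpa [hA, Set.mem_iInter] using hωA
        obtain ⟨v, hv⟩ := this
        have hLv : L ≤ X v ω := (hω v).resolve_left hv
        exact hLv.trans (hXleM v ω)
    have h1 : ∫ ω, (Aᶜ).indicator (fun _ => L) ω ≤ ∫ ω, M ω :=
      integral_mono_ae ((integrable_const L).indicator hAmeas.compl) hMint hgle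
    have h2 : ∫ ω, (Aᶜ).indicator (fun _ => L) ω = (ℙ Aᶜ).toReal * L := by
      rw [integral_indicator_const L hAmeas.compl, smul_eq_mul, measureReal_def]
    have h3 : (ℙ Aᶜ).toReal = 1 - (ℙ A).toReal := by
      rw [measure_compl hAmeas (measure_ne_top _ _), measure_univ,
        ENNReal.toReal_sub_of_le prob_le_one ENNReal.one_ne_top, ENNReal.toReal_one]
    have hq0 : 0 ≤ (ℙ A).toReal := ENNReal.toReal_nonneg
    rw [h2, h3] at h1
    nlinarith [hL.le]
  · -- all-zero probability is large; use independence
    push_neg at hq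
    set B : Fin n → Set Ω := fun v => ⋂ (w : Fin n) (_ : w ≠ v), X w ⁻¹' {0} with hB
    have hBmeas : ∀ v, MeasurableSet (B v) := fun v =>
      MeasurableSet.iInter fun w => MeasurableSet.iInter fun _ =>
        hmeas w (measurableSet_singleton 0)
    have hAB : ∀ v, A ⊆ B v := by
      intro v ω hω
      simp only [hB, Set.mem_iInter, Set.mem_preimage, Set.mem_singleton_iff]
      intro w _
      exact Set.mem_iInter.1 hω w
    -- independence of X v and the indicator of B v
    have hIndep : ∀ v, IndepFun (X v) ((B v).indicator (fun _ => (1 : ℝ))) ℙ := by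
      intro v
      have hdisj : Disjoint ({v} : Finset (Fin n)) (Finset.univ.erase v) := by
        simp [Finset.disjoint_left]
      have h := hindep.indepFun_finset {v} (Finset.univ.erase v) hdisj hmeas
      set T := (Finset.univ.erase v : Finset (Fin n))
      let φ : (↥({v} : Finset (Fin n)) → ℝ) → ℝ := fun g => g ⟨v, Finset.mem_singleton_self v⟩
      let C : Set (↥T → ℝ) := {g | ∀ i : ↥T, g i = 0}
      have hC : MeasurableSet C := by
        have : C = ⋂ i : ↥T, (fun g : ↥T → ℝ => g i) ⁻¹' {0} := by
          ext g; simp [C]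
        rw [this]
        exact MeasurableSet.iInter fun i =>
          (measurable_pi_apply i) (measurableSet_singleton 0)
      let ψ : (↥T → ℝ) → ℝ := C.indicator (fun _ => (1 : ℝ))
      have hφ : Measurable φ := measurable_pi_apply _
      have hψ : Measurable ψ := measurable_const.indicator hC
      have h2 := h.comp hφ hψ
      have hleft : (φ ∘ fun a (i : ↥({v} : Finset (Fin n))) => X i a) = X v := rfl
      have hright : (ψ ∘ fun a (i : ↥T) => X i a) = (B v).indicator (fun _ => (1 : ℝ)) := by
        funext ω
        have hmem : ((fun i : ↥T => X i ω) ∈ C) ↔ ω ∈ B v := by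
          simp only [C, Set.mem_setOf_eq, Subtype.forall, hB, Set.mem_iInter,
            Set.mem_preimage, Set.mem_singleton_iff, T, Finset.mem_erase, Finset.mem_univ,
            and_true]
        by_cases hω : ω ∈ B v
        · simp only [Function.comp_apply, ψ, Set.indicator_of_mem (hmem.2 hω),
            Set.indicator_of_mem hω]
        · simp only [Function.comp_apply, ψ,
            Set.indicator_of_notMem (fun hc => hω (hmem.1 hc)),
            Set.indicator_of_notMem hω]
      rw [hleft, hright] at h2
      exact h2
    -- pointwise bound
    have hg2le : ∀ ω, (∑ v, X v ω * (B v).indicator (fun _ => (1 : ℝ)) ω) ≤ M ω := by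
      intro ω
      by_cases hex : ∃ v, ω ∈ B v ∧ X v ω ≠ 0
      · obtain ⟨v, hvB, hv0⟩ := hex
        have hzero : ∀ w, w ≠ v → X w ω = 0 := by
          intro w hw
          have := Set.mem_iInter.1 hvB w
          exact Set.mem_iInter.1 this hw
        have : (∑ w, X w ω * (B w).indicator (fun _ => (1 : ℝ)) ω)
            = X v ω * (B v).indicator (fun _ => (1 : ℝ)) ω := by
          refine Finset.sum_eq_single v (fun w _ hw => ?_) (by simp)
          rw [hzero w hw, zero_mul]
        rw [this, Set.indicator_of_mem hvB, mul_one]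
        exact hXleM v ω
      · push_neg at hex
        have : ∀ v : Fin n, X v ω * (B v).indicator (fun _ => (1 : ℝ)) ω = 0 := by
          intro v
          by_cases hω : ω ∈ B v
          · rw [hex v hω, zero_mul]
          · rw [Set.indicator_of_notMem hω, mul_zero]
        rw [Finset.sum_congr rfl fun v _ => this v, Finset.sum_const_zero]
        exact hMnn ω
    -- integrability of each term
    have hterm_eq : ∀ v, (fun ω => X v ω * (B v).indicator (fun _ => (1 : ℝ)) ω)
        = (B v).indicator (X v) := by
      intro v; funext ω
      by_cases hω : ω ∈ B v
      · rw [Set.indicator_of_mem hω, Set.indicator_of_mem hω, mul_one]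
      · rw [Set.indicator_of_notMem hω, Set.indicator_of_notMem hω, mul_zero]
    have hterm_int : ∀ v, Integrable (fun ω => X v ω * (B v).indicator (fun _ => (1 : ℝ)) ω) ℙ := by
      intro v; rw [hterm_eq v]; exact (hint v).indicator (hBmeas v)
    have h1 : ∫ ω, (∑ v, X v ω * (B v).indicator (fun _ => (1 : ℝ)) ω) ≤ ∫ ω, M ω :=
      integral_mono_ae (integrable_finset_sum _ fun v _ => hterm_int v) hMint
        (ae_of_all _ hg2le)
    have h2 : ∫ ω, (∑ v, X v ω * (B v).indicator (fun _ => (1 : ℝ)) ω)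
        = ∑ v, (∫ ω, X v ω) * (ℙ (B v)).toReal := by
      rw [integral_finset_sum _ fun v _ => hterm_int v]
      refine Finset.sum_congr rfl fun v _ => ?_
      have := (hIndep v).integral_mul_eq_mul_integral (hint v).aestronglyMeasurable
        (measurable_const.indicator (hBmeas v)).aestronglyMeasurable
      have hmul : ∫ ω, X v ω * (B v).indicator (fun _ => (1 : ℝ)) ω
          = (∫ ω, X v ω) * ∫ ω, (B v).indicator (fun _ => (1 : ℝ)) ω := this
      rw [hmul, integral_indicator_const (1 : ℝ) (hBmeas v), smul_eq_mul, mul_one, measureReal_def]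
    have h3 : ∀ v, (3 / 4 : ℝ) * ∫ ω, X v ω ≤ (∫ ω, X v ω) * (ℙ (B v)).toReal := by
      intro v
      have hIv : 0 ≤ ∫ ω, X v ω := integral_nonneg (h0 v)
      have hBq : (ℙ A).toReal ≤ (ℙ (B v)).toReal :=
        ENNReal.toReal_mono (measure_ne_top _ _) (measure_mono (hAB v))
      nlinarith [hq.le]
    have h4 : (3 / 4 : ℝ) * L ≤ ∑ v, (∫ ω, X v ω) * (ℙ (B v)).toReal := by
      calc (3 / 4 : ℝ) * L ≤ (3 / 4 : ℝ) * ∑ v, ∫ ω, X v ω := by nlinarith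
        _ = ∑ v, (3 / 4 : ℝ) * ∫ ω, X v ω := Finset.mul_sum _ _ _
        _ ≤ _ := Finset.sum_le_sum fun v _ => h3 v
    rw [h2] at h1
    nlinarith [hL.le]

theorem stmt_12 {Ω : Type*} [MeasureSpace Ω] [IsProbabilityMeasure (ℙ : Measure Ω)]
    (n k : ℕ) (hk : 0 < k) (L : ℝ) (hL : 0 < L)
    (X : Fin n → Ω → ℝ)
    (hint : ∀ v, Integrable (X v) ℙ)
    (h0 : ∀ v ω, 0 ≤ X v ω)
    (hindep : iIndepFun X ℙ)
    (hsupp : ∀ v, ∀ᵐ ω ∂ℙ, X v ω = 0 ∨ L ≤ X v ω)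
    (hsum : L ≤ ∑ v, ∫ ω, X v ω)
    (assign : Fin n → Fin k) :
    L / 4 ≤ ∫ ω, ⨆ i : Fin k,
      ∑ v ∈ Finset.univ.filter (fun v => assign v = i), X v ω := by
  classical
  -- replace X by measurable modifications
  set Y : Fin n → Ω → ℝ :=
    fun v ω => max ((hint v).aemeasurable.mk (X v) ω) 0 with hY
  have hYmeas : ∀ v, Measurable (Y v) := fun v =>
    ((hint v).aemeasurable.measurable_mk).max measurable_const
  have hXY : ∀ v, X v =ᵐ[ℙ] Y v := by
    intro v
    filter_upwards [(hint v).aemeasurable.ae_eq_mk] with ω hω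
    rw [hY]
    simp only [← hω]
    exact (max_eq_left (h0 v ω)).symm
  have hYint : ∀ v, Integrable (Y v) ℙ := fun v => (hint v).congr (hXY v)
  have hY0 : ∀ v ω, 0 ≤ Y v ω := fun v ω => le_max_right _ _
  have hYindep : iIndepFun Y ℙ := by
    rw [iIndepFun_iff_measure_inter_preimage_eq_mul]
    intro S sets H
    have hpre : ∀ v : Fin n, ∀ᵐ ω ∂ℙ, (ω ∈ X v ⁻¹' sets v ↔ ω ∈ Y v ⁻¹' sets v) := by
      intro v
      filter_upwards [hXY v] with ω hω
      simp only [Set.mem_preimage, hω]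
    have h1 : ℙ (⋂ i ∈ S, Y i ⁻¹' sets i) = ℙ (⋂ i ∈ S, X i ⁻¹' sets i) := by
      refine measure_congr (Filter.eventuallyEq_set.2 ?_)
      filter_upwards [ae_all_iff.2 hpre] with ω hω
      simp only [Set.mem_iInter]
      exact ⟨fun h i hi => (hω i).2 (h i hi), fun h i hi => (hω i).1 (h i hi)⟩
    have h2 : ∀ i : Fin n, ℙ (Y i ⁻¹' sets i) = ℙ (X i ⁻¹' sets i) := fun i =>
      measure_congr (Filter.eventuallyEq_set.2 ((hpre i).mono fun ω h => h.symm))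
    rw [h1, Finset.prod_congr rfl fun i _ => h2 i]
    exact hindep.measure_inter_preimage_eq_mul S H
  have hYsupp : ∀ v, ∀ᵐ ω ∂ℙ, Y v ω = 0 ∨ L ≤ Y v ω := by
    intro v
    filter_upwards [hsupp v, hXY v] with ω h1 h2
    rw [← h2]; exact h1
  have hYsum : L ≤ ∑ v, ∫ ω, Y v ω := by
    refine le_trans hsum (le_of_eq (Finset.sum_congr rfl fun v _ => ?_))
    exact integral_congr_ae (hXY v)
  have hfin := stmt_12_meas n k hk L hL Y hYmeas hYint hY0 hYindep hYsupp hYsum assign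
  refine le_trans hfin (le_of_eq (integral_congr_ae ?_))
  filter_upwards [ae_all_iff.2 hXY] with ω hω
  exact iSup_congr fun i => Finset.sum_congr rfl fun v _ => (hω v).symm
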